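/- Let F_n be the free group on x_1,…,x_n with n ≥ 3. The group Aut_c(RF_n) of automorphisms of the reduced free group RF_n sending each generator x_i to a conjugate of itself is non-abelian. -/

import Mathlib

/-- The set of relators `[x_i, w⁻¹ x_i w]` (with `[a,b] = a⁻¹b⁻¹ab`) in the free group. -/
def redRelators (n : ℕ) : Set (FreeGroup (Fin n)) :=
  {r | ∃ (i : Fin n) (w : FreeGroup (Fin n)),
    r = (FreeGroup.of i)⁻¹ * (w⁻¹ * FreeGroup.of i * w)⁻¹ *
        FreeGroup.of i * (w⁻¹ * FreeGroup.of i * w)}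

/-- The reduced free group `RF_n`. -/
def RF (n : ℕ) := FreeGroup (Fin n) ⧸ Subgroup.normalClosure (redRelators n)

instance (n : ℕ) : Group (RF n) := by unfold RF; infer_instance

/-! ### Matrix target: unitriangular 4×4 integer matrices -/

abbrev M4 := Matrix (Fin 4) (Fin 4) ℤ

def eM (a b : Fin 4) : M4 := Matrix.of fun i j => if i = a ∧ j = b then 1 else 0

def isUT (m : M4) : Prop :=
  m 0 0 = 1 ∧ m 1 1 = 1 ∧ m 2 2 = 1 ∧ m 3 3 = 1 ∧
  m 1 0 = 0 ∧ m 2 0 = 0 ∧ m 3 0 = 0 ∧ m 2 1 = 0 ∧ m 3 1 = 0 ∧ m 3 2 = 0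

lemma isUT_one : isUT 1 := by simp [isUT, Matrix.one_apply]

lemma isUT_mul {M N : M4} (hM : isUT M) (hN : isUT N) : isUT (M * N) := by
  obtain ⟨a1,a2,a3,a4,a5,a6,a7,a8,a9,a10⟩ := hM
  obtain ⟨b1,b2,b3,b4,b5,b6,b7,b8,b9,b10⟩ := hN
  refine ⟨?_,?_,?_,?_,?_,?_,?_,?_,?_,?_⟩ <;>
    simp [Matrix.mul_apply, Fin.sum_univ_four, *]

lemma sand1 {Q : M4} (h : Q 1 0 = 0) : eM 0 1 * Q * eM 0 1 = 0 := by
  ext i j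
  fin_cases i <;> fin_cases j <;>
    simp [eM, Matrix.mul_apply, Fin.sum_univ_four, h]

lemma sand2 {Q : M4} (h : Q 2 1 = 0) : eM 1 2 * Q * eM 1 2 = 0 := by
  ext i j
  fin_cases i <;> fin_cases j <;>
    simp [eM, Matrix.mul_apply, Fin.sum_univ_four, h]

lemma sand3 {Q : M4} (h : Q 3 2 = 0) : eM 2 3 * Q * eM 2 3 = 0 := by
  ext i j
  fin_cases i <;> fin_cases j <;>
    simp [eM, Matrix.mul_apply, Fin.sum_univ_four, h]

lemma inv_eM (a b : Fin 4) (h : eM a b * eM a b = 0) :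
    (1 + eM a b : M4) * (1 - eM a b) = 1 ∧ (1 - eM a b : M4) * (1 + eM a b) = 1 := by
  constructor <;>
  · simp only [mul_sub, sub_mul, mul_add, add_mul, one_mul, mul_one, h]
    abel

lemma eM_sq (a b : Fin 4) (hab : a ≠ b) : eM a b * eM a b = 0 := by
  ext i j
  fin_cases i <;> fin_cases j <;>
    simp [eM, Matrix.mul_apply, Fin.sum_univ_four] <;> omega

/-- Key algebraic lemma: `1+e` commutes with its conjugates. -/
lemma key_mat (e P Q : M4) (hQP : Q * P = 1) (h1 : e * Q * e = 0) (h2 : e * P * e = 0) :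
    (1 + e) * (Q * ((1 + e) * P)) = (Q * ((1 + e) * P)) * (1 + e) := by
  have hmid : Q * ((1 + e) * P) = 1 + Q * (e * P) := by
    rw [add_mul, one_mul, mul_add, ← mul_assoc, hQP]
  have hA : e * (Q * (e * P)) = 0 := by
    rw [← mul_assoc, ← mul_assoc, h1, zero_mul]
  have hB : (Q * (e * P)) * e = 0 := by
    rw [mul_assoc, mul_assoc, ← mul_assoc e P e, h2, mul_zero]
  rw [hmid]
  simp only [mul_add, add_mul, one_mul, mul_one, hA, hB, add_zero]
  abel

/-! ### Unit matrices and the unitriangular subgroup -/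

def uGen (a b : Fin 4) (hab : a ≠ b) : M4ˣ :=
  ⟨1 + eM a b, 1 - eM a b, (inv_eM a b (eM_sq a b hab)).1, (inv_eM a b (eM_sq a b hab)).2⟩

def A : M4ˣ := uGen 0 1 (by decide)
def B : M4ˣ := uGen 1 2 (by decide)
def C : M4ˣ := uGen 2 3 (by decide)

/-- The subgroup of `M4ˣ` of unitriangular units with unitriangular inverse. -/
def H : Subgroup M4ˣ where
  carrier := {u | isUT (u : M4) ∧ isUT ((u⁻¹ : M4ˣ) : M4)}
  one_mem' := ⟨isUT_one, by simpa using isUT_one⟩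
  mul_mem' := fun {a b} ha hb =>
    ⟨by rw [Units.val_mul]; exact isUT_mul ha.1 hb.1,
     by rw [mul_inv_rev, Units.val_mul]; exact isUT_mul hb.2 ha.2⟩
  inv_mem' := fun {a} ha => ⟨ha.2, by simpa using ha.1⟩

lemma isUT_onePlus (a b : Fin 4) (h : (a:ℕ) < b) : isUT (1 + eM a b) := by
  fin_cases a <;> fin_cases b <;> simp_all <;>
    (refine ⟨?_,?_,?_,?_,?_,?_,?_,?_,?_,?_⟩ <;> simp [eM, Matrix.one_apply])

lemma isUT_oneMinus (a b : Fin 4) (h : (a:ℕ) < b) : isUT (1 - eM a b) := by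
  fin_cases a <;> fin_cases b <;> simp_all <;>
    (refine ⟨?_,?_,?_,?_,?_,?_,?_,?_,?_,?_⟩ <;> simp [eM, Matrix.one_apply])

lemma A_mem : A ∈ H := ⟨isUT_onePlus 0 1 (by norm_num), isUT_oneMinus 0 1 (by norm_num)⟩
lemma B_mem : B ∈ H := ⟨isUT_onePlus 1 2 (by norm_num), isUT_oneMinus 1 2 (by norm_num)⟩
lemma C_mem : C ∈ H := ⟨isUT_onePlus 2 3 (by decide), isUT_oneMinus 2 3 (by decide)⟩

/-- `x = 1 + e` commutes with all its conjugates by elements of `H` provided the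
sandwich with `e` vanishes on `H`. -/
lemma commute_conj (e : M4) (x u : M4ˣ) (hx : (x : M4) = 1 + e)
    (hQ : e * ((u⁻¹ : M4ˣ) : M4) * e = 0) (hP : e * (u : M4) * e = 0) :
    x * (u⁻¹ * x * u) = (u⁻¹ * x * u) * x := by
  have := key_mat e (u : M4) ((u⁻¹ : M4ˣ) : M4) (u.inv_mul) hQ hP
  apply Units.ext
  simp only [Units.val_mul, hx]
  rw [mul_assoc ((u⁻¹ : M4ˣ) : M4) (1 + e) (u : M4)]
  exact this

/-! ### The homomorphism from the free group -/

section Main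
variable (n : ℕ) (hn : 3 ≤ n)

def gmap : Fin n → M4ˣ := fun j =>
  if (j : ℕ) = 0 then A else if (j : ℕ) = 1 then B else if (j : ℕ) = 2 then C else 1

def fF : FreeGroup (Fin n) →* M4ˣ := FreeGroup.lift (gmap n)

lemma gmap_mem (j : Fin n) : gmap n j ∈ H := by
  unfold gmap
  split_ifs <;> first
    | exact A_mem | exact B_mem | exact C_mem | exact H.one_mem

lemma fF_mem (w : FreeGroup (Fin n)) : fF n w ∈ H := by
  induction w using FreeGroup.induction_on with
  | C1 => simp only [map_one]; exact H.one_mem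
  | of x =>
            rw [fF, FreeGroup.lift_apply_of]; exact gmap_mem n x
  | inv_of x hx => simp only [map_inv]; exact H.inv_mem hx
  | mul x y hx hy => simp only [map_mul]; exact H.mul_mem hx hy

lemma commute_gen (j : Fin n) (u : M4ˣ) (hu : u ∈ H) :
    gmap n j * (u⁻¹ * gmap n j * u) = (u⁻¹ * gmap n j * u) * gmap n j := by
  obtain ⟨hP, hQ⟩ := hu
  unfold gmap
  split_ifs with h0 h1 h2
  · exact commute_conj (eM 0 1) A u rfl (sand1 hQ.2.2.2.2.1) (sand1 hP.2.2.2.2.1)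
  · exact commute_conj (eM 1 2) B u rfl (sand2 hQ.2.2.2.2.2.2.2.1) (sand2 hP.2.2.2.2.2.2.2.1)
  · exact commute_conj (eM 2 3) C u rfl (sand3 hQ.2.2.2.2.2.2.2.2.2) (sand3 hP.2.2.2.2.2.2.2.2.2)
  · group

lemma fF_kills : Subgroup.normalClosure (redRelators n) ≤ (fF n).ker := by
  apply Subgroup.normalClosure_le_normal
  rintro r ⟨i, w, rfl⟩
  rw [SetLike.mem_coe, MonoidHom.mem_ker]
  simp only [map_mul, map_inv]
  have hof : fF n (FreeGroup.of i) = gmap n i := FreeGroup.lift_apply_of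
  rw [hof]
  have hc := commute_gen n i (fF n w) (fF_mem n w)
  set a := gmap n i
  set g := fF n w
  -- goal : a⁻¹ * (g⁻¹ * a * g)⁻¹ * a * (g⁻¹ * a * g) = 1
  have : a * (g⁻¹ * a * g) = (g⁻¹ * a * g) * a := hc
  calc a⁻¹ * (g⁻¹ * a * g)⁻¹ * a * (g⁻¹ * a * g)
      = (g⁻¹ * a * g * a)⁻¹ * (a * (g⁻¹ * a * g)) := by group
    _ = (g⁻¹ * a * g * a)⁻¹ * (g⁻¹ * a * g * a) := by rw [this]
    _ = 1 := inv_mul_cancel _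

def fbar : RF n →* M4ˣ := QuotientGroup.lift _ (fF n) (fF_kills n)

lemma fbar_mk (w : FreeGroup (Fin n)) : fbar n (QuotientGroup.mk w) = fF n w := rfl

end Main

/-! ### Descending conjugating endomorphisms to RF -/

section Descent
variable {n : ℕ}

lemma descend_ker (Φ : FreeGroup (Fin n) →* FreeGroup (Fin n))
    (h : ∀ i, ∃ c, Φ (FreeGroup.of i) = c⁻¹ * FreeGroup.of i * c) :
    Subgroup.normalClosure (redRelators n) ≤
      ((QuotientGroup.mk' (Subgroup.normalClosure (redRelators n))).comp Φ).ker := by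
  apply Subgroup.normalClosure_le_normal
  rintro r ⟨i, w, rfl⟩
  rw [SetLike.mem_coe, MonoidHom.mem_ker]
  obtain ⟨c, hc⟩ := h i
  set v := c * Φ w * c⁻¹ with hv
  have hΦr : Φ ((FreeGroup.of i)⁻¹ * (w⁻¹ * FreeGroup.of i * w)⁻¹ *
        FreeGroup.of i * (w⁻¹ * FreeGroup.of i * w)) =
      c⁻¹ * ((FreeGroup.of i)⁻¹ * (v⁻¹ * FreeGroup.of i * v)⁻¹ *
        FreeGroup.of i * (v⁻¹ * FreeGroup.of i * v)) * c := by
    simp only [map_mul, map_inv, hc, hv]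
    group
  have hrel : ((FreeGroup.of i)⁻¹ * (v⁻¹ * FreeGroup.of i * v)⁻¹ *
      FreeGroup.of i * (v⁻¹ * FreeGroup.of i * v)) ∈
      Subgroup.normalClosure (redRelators n) :=
    Subgroup.subset_normalClosure ⟨i, v, rfl⟩
  have hmem : Φ ((FreeGroup.of i)⁻¹ * (w⁻¹ * FreeGroup.of i * w)⁻¹ *
        FreeGroup.of i * (w⁻¹ * FreeGroup.of i * w)) ∈
      Subgroup.normalClosure (redRelators n) := by
    rw [hΦr]
    simpa using (Subgroup.normalClosure_normal (s := redRelators n)).conj_mem _ hrel c⁻¹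
  rw [MonoidHom.comp_apply, QuotientGroup.mk'_apply]
  exact (QuotientGroup.eq_one_iff _).2 hmem

end Descent

/-! ### Conjugating automorphisms of RF -/

section Autos
variable {n : ℕ}

def descendHom (Φ : FreeGroup (Fin n) →* FreeGroup (Fin n))
    (h : ∀ i, ∃ c, Φ (FreeGroup.of i) = c⁻¹ * FreeGroup.of i * c) : RF n →* RF n :=
  QuotientGroup.lift _ ((QuotientGroup.mk' _).comp Φ) (descend_ker Φ h)

lemma descendHom_mk (Φ : FreeGroup (Fin n) →* FreeGroup (Fin n))
    (h : ∀ i, ∃ c, Φ (FreeGroup.of i) = c⁻¹ * FreeGroup.of i * c)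
    (x : FreeGroup (Fin n)) :
    descendHom Φ h (QuotientGroup.mk x) = QuotientGroup.mk (Φ x) := rfl

def autOf (Φ Φ' : FreeGroup (Fin n) →* FreeGroup (Fin n))
    (h : ∀ i, ∃ c, Φ (FreeGroup.of i) = c⁻¹ * FreeGroup.of i * c)
    (h' : ∀ i, ∃ c, Φ' (FreeGroup.of i) = c⁻¹ * FreeGroup.of i * c)
    (hinv : Φ.comp Φ' = MonoidHom.id _) (hinv' : Φ'.comp Φ = MonoidHom.id _) :
    MulAut (RF n) where
  toFun := descendHom Φ h
  invFun := descendHom Φ' h'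
  left_inv := fun q => QuotientGroup.induction_on q (fun z => by
    rw [descendHom_mk, descendHom_mk]
    change QuotientGroup.mk ((Φ'.comp Φ) z) = _
    rw [hinv', MonoidHom.id_apply])
  right_inv := fun q => QuotientGroup.induction_on q (fun z => by
    rw [descendHom_mk, descendHom_mk]
    change QuotientGroup.mk ((Φ.comp Φ') z) = _
    rw [hinv, MonoidHom.id_apply])
  map_mul' := map_mul (descendHom Φ h)

def conjEndo (a b : Fin n) : FreeGroup (Fin n) →* FreeGroup (Fin n) :=
  FreeGroup.lift (fun j => if j = a
    then (FreeGroup.of b)⁻¹ * FreeGroup.of a * FreeGroup.of b else FreeGroup.of j)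

def conjEndo' (a b : Fin n) : FreeGroup (Fin n) →* FreeGroup (Fin n) :=
  FreeGroup.lift (fun j => if j = a
    then FreeGroup.of b * FreeGroup.of a * (FreeGroup.of b)⁻¹ else FreeGroup.of j)

lemma conjEndo_of_self (a b : Fin n) :
    conjEndo a b (FreeGroup.of a) =
      (FreeGroup.of b)⁻¹ * FreeGroup.of a * FreeGroup.of b := by
  simp [conjEndo]

lemma conjEndo_of_ne (a b : Fin n) {j : Fin n} (hj : j ≠ a) :
    conjEndo a b (FreeGroup.of j) = FreeGroup.of j := by
  simp [conjEndo, hj]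

lemma conjEndo'_of_self (a b : Fin n) :
    conjEndo' a b (FreeGroup.of a) =
      FreeGroup.of b * FreeGroup.of a * (FreeGroup.of b)⁻¹ := by
  simp [conjEndo']

lemma conjEndo'_of_ne (a b : Fin n) {j : Fin n} (hj : j ≠ a) :
    conjEndo' a b (FreeGroup.of j) = FreeGroup.of j := by
  simp [conjEndo', hj]

lemma conjEndo_comp (a b : Fin n) (hab : b ≠ a) :
    (conjEndo a b).comp (conjEndo' a b) = MonoidHom.id _ := by
  apply FreeGroup.ext_hom
  intro j
  rw [MonoidHom.comp_apply, MonoidHom.id_apply]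
  by_cases hj : j = a
  · subst hj
    rw [conjEndo'_of_self, map_mul, map_mul, map_inv, conjEndo_of_ne j b hab,
      conjEndo_of_self]
    group
  · rw [conjEndo'_of_ne a b hj, conjEndo_of_ne a b hj]

lemma conjEndo'_comp (a b : Fin n) (hab : b ≠ a) :
    (conjEndo' a b).comp (conjEndo a b) = MonoidHom.id _ := by
  apply FreeGroup.ext_hom
  intro j
  rw [MonoidHom.comp_apply, MonoidHom.id_apply]
  by_cases hj : j = a
  · subst hj
    rw [conjEndo_of_self, map_mul, map_mul, map_inv, conjEndo'_of_ne j b hab,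
      conjEndo'_of_self]
    group
  · rw [conjEndo_of_ne a b hj, conjEndo'_of_ne a b hj]

lemma conjEndo_conj (a b : Fin n) :
    ∀ i, ∃ c, conjEndo a b (FreeGroup.of i) = c⁻¹ * FreeGroup.of i * c := by
  intro i
  by_cases hi : i = a
  · subst hi; exact ⟨FreeGroup.of b, conjEndo_of_self i b⟩
  · exact ⟨1, by rw [conjEndo_of_ne a b hi]; group⟩

lemma conjEndo'_conj (a b : Fin n) :
    ∀ i, ∃ c, conjEndo' a b (FreeGroup.of i) = c⁻¹ * FreeGroup.of i * c := by
  intro i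
  by_cases hi : i = a
  · subst hi; exact ⟨(FreeGroup.of b)⁻¹, by rw [conjEndo'_of_self]; group⟩
  · exact ⟨1, by rw [conjEndo'_of_ne a b hi]; group⟩

def conjAut (a b : Fin n) (hab : b ≠ a) : MulAut (RF n) :=
  autOf (conjEndo a b) (conjEndo' a b) (conjEndo_conj a b) (conjEndo'_conj a b)
    (conjEndo_comp a b hab) (conjEndo'_comp a b hab)

lemma conjAut_mk (a b : Fin n) (hab : b ≠ a) (x : FreeGroup (Fin n)) :
    conjAut a b hab (QuotientGroup.mk x) = QuotientGroup.mk (conjEndo a b x) := rfl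

end Autos

lemma A_val : (A : M4) = 1 + eM 0 1 := rfl
lemma A_inv : ((A⁻¹ : M4ˣ) : M4) = 1 - eM 0 1 := rfl
lemma B_val : (B : M4) = 1 + eM 1 2 := rfl
lemma B_inv : ((B⁻¹ : M4ˣ) : M4) = 1 - eM 1 2 := rfl
lemma C_val : (C : M4) = 1 + eM 2 3 := rfl
lemma C_inv : ((C⁻¹ : M4ˣ) : M4) = 1 - eM 2 3 := rfl

/-- For n ≥ 3, the group Aut_c(RF_n) of automorphisms sending each generator
to a conjugate of itself is non-abelian. -/
theorem autC_RF_nonabelian (n : ℕ) (hn : 3 ≤ n) :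
    ∃ φ ψ : MulAut (RF n),
      (∀ i : Fin n, ∃ l : RF n,
        φ (QuotientGroup.mk (FreeGroup.of i)) =
          l⁻¹ * QuotientGroup.mk (FreeGroup.of i) * l) ∧
      (∀ i : Fin n, ∃ l : RF n,
        ψ (QuotientGroup.mk (FreeGroup.of i)) =
          l⁻¹ * QuotientGroup.mk (FreeGroup.of i) * l) ∧
      φ * ψ ≠ ψ * φ := by
  set i0 : Fin n := ⟨0, by omega⟩ with hi0
  set i1 : Fin n := ⟨1, by omega⟩ with hi1
  set i2 : Fin n := ⟨2, by omega⟩ with hi2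
  have h10 : i1 ≠ i0 := by simp [hi0, hi1, Fin.ext_iff]
  have h20 : i2 ≠ i0 := by simp [hi0, hi2, Fin.ext_iff]
  refine ⟨conjAut i0 i1 h10, conjAut i0 i2 h20, ?_, ?_, ?_⟩
  · intro i
    obtain ⟨c, hc⟩ := conjEndo_conj i0 i1 i
    exact ⟨QuotientGroup.mk c, by
      rw [conjAut_mk, hc]
      simp [QuotientGroup.mk_mul, QuotientGroup.mk_inv]
      rfl⟩
  · intro i
    obtain ⟨c, hc⟩ := conjEndo_conj i0 i2 i
    exact ⟨QuotientGroup.mk c, by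
      rw [conjAut_mk, hc]
      simp [QuotientGroup.mk_mul, QuotientGroup.mk_inv]
      rfl⟩
  · intro heq
    have h1 := congrArg
      (fun α : MulAut (RF n) => α (QuotientGroup.mk (FreeGroup.of i0))) heq
    change conjAut i0 i1 h10 (conjAut i0 i2 h20 (QuotientGroup.mk (FreeGroup.of i0))) = conjAut i0 i2 h20 (conjAut i0 i1 h10 (QuotientGroup.mk (FreeGroup.of i0))) at h1
    rw [conjAut_mk i0 i2 h20, conjEndo_of_self, conjAut_mk i0 i1 h10,
        conjAut_mk i0 i1 h10, conjEndo_of_self, conjAut_mk i0 i2 h20] at h1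
    rw [map_mul, map_mul, map_inv, conjEndo_of_ne i0 i1 h20, conjEndo_of_self] at h1
    rw [map_mul, map_mul, map_inv, conjEndo_of_ne i0 i2 h10, conjEndo_of_self] at h1
    have h2 := congrArg (fbar n) h1
    rw [fbar_mk, fbar_mk] at h2
    simp only [map_mul, map_inv] at h2
    have hg0 : fF n (FreeGroup.of i0) = A := by
      rw [fF, FreeGroup.lift_apply_of]; simp [gmap, hi0]
    have hg1 : fF n (FreeGroup.of i1) = B := by
      rw [fF, FreeGroup.lift_apply_of]; simp [gmap, hi1]
    have hg2 : fF n (FreeGroup.of i2) = C := by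
      rw [fF, FreeGroup.lift_apply_of]; simp [gmap, hi2]
    rw [hg0, hg1, hg2] at h2
    have h3 := congrArg (Units.val) h2
    simp only [Units.val_mul, A_val, A_inv, B_val, B_inv, C_val, C_inv] at h3
    exact absurd h3 (by decide)
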